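/- arXiv:2401.07351 — 2 statements merged into one kernel-verified Lean document; each statement's English description precedes it below -/
import Mathlib

section
/- Let x ≥ 2, k ≥ 1, r ≥ 0 and n be integers with n = k·x + r and k ≤ x − r. Then the base-(2^x − 1) digit list of 2^n is [2^r·C(k,0), 2^r·C(k,1), ..., 2^r·C(k,k)]; i.e., the representation of 2^n in base 2^x − 1 is the binomial form with multiplier α = 2^r. -/
lemma ofDigits_range_map (b m : ℕ) (f : ℕ → ℕ) :
    Nat.ofDigits b ((List.range m).map f) = ∑ i ∈ Finset.range m, f i * b ^ i := by
  induction m with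
  | zero => simp [Nat.ofDigits]
  | succ m ih =>
      rw [List.range_succ, List.map_append, Nat.ofDigits_append, Finset.sum_range_succ, ih]
      simp [Nat.ofDigits, mul_comm]

lemma choose_le_two_pow_pred (k i : ℕ) (hk : 1 ≤ k) : k.choose i ≤ 2 ^ (k - 1) := by
  obtain ⟨m, rfl⟩ : ∃ m, k = m + 1 := ⟨k - 1, by omega⟩
  simp only [Nat.add_sub_cancel]
  cases i with
  | zero => simpa using Nat.one_le_two_pow
  | succ j =>
      rw [Nat.choose_succ_succ]
      rcases le_or_gt (j + 1) m with h | h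
      · calc Nat.choose m j + Nat.choose m (j + 1)
            = ∑ t ∈ ({j, j + 1} : Finset ℕ), Nat.choose m t := by
              rw [Finset.sum_insert (by simp), Finset.sum_singleton]
          _ ≤ ∑ t ∈ Finset.range (m + 1), Nat.choose m t := by
              apply Finset.sum_le_sum_of_subset
              intro t ht
              simp only [Finset.mem_insert, Finset.mem_singleton] at ht
              simp only [Finset.mem_range]
              omega
          _ = 2 ^ m := Nat.sum_range_choose m
      · have h2 : Nat.choose m (j + 1) = 0 := Nat.choose_eq_zero_of_lt h
        have h3 : Nat.choose m j ≤ 2 ^ m := by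
          rcases le_or_gt j m with hj | hj
          · calc Nat.choose m j
                ≤ ∑ t ∈ Finset.range (m + 1), Nat.choose m t :=
                  Finset.single_le_sum (fun t _ => Nat.zero_le _)
                    (Finset.mem_range.mpr (by omega))
            _ = 2 ^ m := Nat.sum_range_choose m
          · simp [Nat.choose_eq_zero_of_lt hj]
        simp only [Nat.succ_eq_add_one]
        omega

/-- If `n = k·x + r` with `x ≥ 2`, `k ≥ 1` and `k ≤ x - r`, then the
base-`(2^x - 1)` digit list of `2^n` is `[2^r·C(k,0), ..., 2^r·C(k,k)]`,
i.e., the binomial form with multiplier `2^r`. -/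
theorem binomial_form_of_small_k (x k r n : ℕ) (hx : 2 ≤ x) (hk : 1 ≤ k)
    (hn : n = k * x + r) (hkr : k ≤ x - r) :
    Nat.digits (2 ^ x - 1) (2 ^ n)
      = (List.range (k + 1)).map (fun i => 2 ^ r * Nat.choose k i) := by
  set b := 2 ^ x - 1 with hb
  have hbx : b + 1 = 2 ^ x := by
    have : 1 ≤ 2 ^ x := Nat.one_le_two_pow
    omega
  have hrk : r + k ≤ x := by
    have : 1 ≤ x - r := le_trans hk hkr
    omega
  have hval : Nat.ofDigits b ((List.range (k + 1)).map fun i => 2 ^ r * Nat.choose k i)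
      = 2 ^ n := by
    rw [ofDigits_range_map]
    have : ∑ i ∈ Finset.range (k + 1), 2 ^ r * Nat.choose k i * b ^ i
        = 2 ^ r * ∑ i ∈ Finset.range (k + 1), b ^ i * 1 ^ (k - i) * Nat.choose k i := by
      rw [Finset.mul_sum]; apply Finset.sum_congr rfl; intro i _; ring
    have hap := add_pow b 1 k
    simp only [Nat.cast_id, one_pow] at hap
    simp only [one_pow] at this
    rw [this, ← hap, hbx, ← pow_mul, ← pow_add, hn]
    ring_nf
  have hlt : ∀ l ∈ (List.range (k + 1)).map fun i => 2 ^ r * Nat.choose k i, l < b := by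
    intro l hl
    simp only [List.mem_map, List.mem_range] at hl
    obtain ⟨i, hi, rfl⟩ := hl
    have h1 : 2 ^ r * Nat.choose k i ≤ 2 ^ r * 2 ^ (k - 1) :=
      Nat.mul_le_mul_left _ (choose_le_two_pow_pred k i hk)
    have h2 : 2 ^ r * 2 ^ (k - 1) = 2 ^ (r + k - 1) := by
      rw [← pow_add]; congr 1; omega
    have h3 : 2 ^ (r + k - 1) < 2 ^ x - 1 := by
      have h4 : r + k - 1 ≤ x - 1 := by omega
      have h5 : (2:ℕ) ^ (r + k - 1) ≤ 2 ^ (x - 1) := Nat.pow_le_pow_right (by norm_num) h4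
      have h6 : 2 ^ (x - 1) * 2 = 2 ^ x := by
        rw [← pow_succ]; congr 1; omega
      have : 2 ≤ 2 ^ (x - 1) := by
        calc 2 = 2 ^ 1 := rfl
        _ ≤ 2 ^ (x - 1) := Nat.pow_le_pow_right (by norm_num) (by omega)
      omega
    omega
  rw [← hval]
  apply Nat.digits_ofDigits
  · have : 4 ≤ 2 ^ x := by
      calc (4:ℕ) = 2 ^ 2 := rfl
      _ ≤ 2 ^ x := Nat.pow_le_pow_right (by norm_num) hx
    omega
  · exact hlt
  · intro h
    rw [List.getLast_eq_getElem]
    simp [Nat.choose_self]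
end

section
/- For every integer n ≥ 2 there exist integers x, k ≥ 1 and r ≥ 0 with x ≤ ⌈√(2n)⌉ + 1, n = k·x + r, and such that the base-(2^x − 1) digit list of 2^n is [2^r·C(k,0), 2^r·C(k,1), ..., 2^r·C(k,k)]. In particular, 2^n has a binomial-form (hence palindromic) representation in some base b ≤ 2^y − 1 with y ≤ ⌈√(2n)⌉ + 1. -/
lemma ofDigits_map_range (b : ℕ) (f : ℕ → ℕ) (m : ℕ) :
    Nat.ofDigits b ((List.range m).map f) = ∑ i ∈ Finset.range m, f i * b ^ i := by
  induction m with
  | zero => simp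
  | succ m ih =>
    rw [List.range_succ, List.map_append, Nat.ofDigits_append, ih, Finset.sum_range_succ]
    simp [Nat.mul_comm]

lemma digits_binomial (x k r : ℕ) (hx : 2 ≤ x) (hk : 1 ≤ k) (h : r + k ≤ x) :
    Nat.digits (2 ^ x - 1) (2 ^ (k * x + r))
      = (List.range (k + 1)).map (fun i => 2 ^ r * Nat.choose k i) := by
  have hb : 1 < 2 ^ x - 1 := by
    have : (4:ℕ) ≤ 2 ^ x := by calc (4:ℕ) = 2^2 := rfl
                                 _ ≤ 2^x := Nat.pow_le_pow_right (by norm_num) hx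
    omega
  have hlt : ∀ l ∈ (List.range (k + 1)).map (fun i => 2 ^ r * Nat.choose k i), l < 2 ^ x - 1 := by
    intro l hl
    simp only [List.mem_map, List.mem_range] at hl
    obtain ⟨i, hi, rfl⟩ := hl
    calc 2 ^ r * k.choose i ≤ 2 ^ r * 2 ^ (k - 1) :=
          Nat.mul_le_mul_left _ (choose_le_two_pow_pred k i hk)
      _ = 2 ^ (r + (k - 1)) := (pow_add 2 r (k-1)).symm
      _ ≤ 2 ^ (x - 1) := Nat.pow_le_pow_right (by norm_num) (by omega)
      _ < 2 ^ x - 1 := by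
          have h1 : 2 ^ (x - 1) * 2 = 2 ^ x := by
            rw [← pow_succ]; congr 1; omega
          have h2 : (2:ℕ) ≤ 2 ^ (x-1) := by
            calc (2:ℕ) = 2^1 := rfl
              _ ≤ 2^(x-1) := Nat.pow_le_pow_right (by norm_num) (by omega)
          omega
  have hof : Nat.ofDigits (2 ^ x - 1) ((List.range (k + 1)).map
      (fun i => 2 ^ r * Nat.choose k i)) = 2 ^ (k * x + r) := by
    rw [ofDigits_map_range]
    have hb1 : 2 ^ x - 1 + 1 = 2 ^ x := Nat.succ_pred_eq_of_pos (Nat.two_pow_pos x)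
    calc ∑ i ∈ Finset.range (k+1), 2 ^ r * k.choose i * (2^x-1) ^ i
        = 2 ^ r * ∑ i ∈ Finset.range (k+1), (2^x-1) ^ i * 1 ^ (k - i) * k.choose i := by
          rw [Finset.mul_sum]; apply Finset.sum_congr rfl; intro i _; ring
      _ = 2 ^ r * (2 ^ x - 1 + 1) ^ k := by rw [add_pow]; simp
      _ = 2 ^ r * (2 ^ x) ^ k := by rw [hb1]
      _ = 2 ^ (k * x + r) := by rw [← pow_mul, ← pow_add]; ring_nf
  rw [← hof, Nat.digits_ofDigits _ hb]
  · exact hlt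
  · intro h'
    rw [List.getLast_eq_getElem]
    simp [Nat.choose_self]

lemma lt_ceil_sqrt (n m : ℕ) (h : m ^ 2 < 2 * n) : m < ⌈Real.sqrt (2 * (n : ℝ))⌉₊ := by
  rw [Nat.lt_ceil]
  apply Real.lt_sqrt_of_sq_lt
  exact_mod_cast h

/-- For all `n ≥ 2`, `2^n` has a base-`(2^x - 1)` binomial-form representation
for some `x ≤ ⌈√(2n)⌉ + 1`. -/
theorem binomial_form_small_base (n : ℕ) (hn : 2 ≤ n) :
    ∃ x k r : ℕ, 1 ≤ x ∧ 1 ≤ k ∧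
      x ≤ ⌈Real.sqrt (2 * n)⌉₊ + 1 ∧ n = k * x + r ∧
      Nat.digits (2 ^ x - 1) (2 ^ n)
        = (List.range (k + 1)).map (fun i => 2 ^ r * Nat.choose k i) := by
  set k0 := Nat.sqrt (n / 2) with hk0def
  have hk0 : 1 ≤ k0 := Nat.sqrt_pos.mpr (by omega)
  obtain ⟨S, hS⟩ : ∃ S, S = k0 * k0 := ⟨_, rfl⟩
  have hA : S ≤ n / 2 := by rw [hS]; exact Nat.sqrt_le (n / 2)
  have hB2 : n / 2 < S + 2 * k0 + 1 := by
    have h' : n / 2 < (k0 + 1) * (k0 + 1) := by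
      simpa [Nat.succ_eq_add_one, ← hk0def] using Nat.lt_succ_sqrt (n / 2)
    have hexp : (k0 + 1) * (k0 + 1) = S + 2 * k0 + 1 := by rw [hS]; ring
    omega
  have h2S : 2 * S ≤ n := by omega
  have hup0 : n ≤ 2 * S + 4 * k0 + 1 := by omega
  set q := n / k0 with hqdef
  set r0 := n % k0 with hr0def
  have hdm : k0 * q + r0 = n := Nat.div_add_mod n k0
  have hr0 : r0 < k0 := Nat.mod_lt _ (by omega)
  have hq2k : 2 * k0 ≤ q := by
    rw [hqdef]
    rw [Nat.le_div_iff_mul_le (by omega)]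
    calc 2 * k0 * k0 = 2 * (k0 * k0) := by ring
      _ = 2 * S := by rw [hS]
      _ ≤ n := h2S
  have hkq : k0 * q ≤ n := Nat.le.intro hdm
  by_cases hBq : (q - 2) ^ 2 < 2 * n
  · refine ⟨q, k0, r0, by omega, hk0, ?_, hdm.symm, ?_⟩
    · have := lt_ceil_sqrt n (q - 2) hBq
      omega
    · rw [show n = k0 * q + r0 from hdm.symm]
      exact digits_binomial q k0 r0 (by omega) hk0 (by omega)
  · -- q ≥ 2k0 + 4
    have hq4 : 2 * k0 + 4 ≤ q := by
      by_contra hc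
      apply hBq
      obtain ⟨m, hqm⟩ : ∃ m, q = m + 2 := ⟨q - 2, by omega⟩
      have hm : m ≤ 2 * k0 + 1 := by omega
      have hkq' : k0 * (m + 2) ≤ n := by rw [← hqm]; exact hkq
      have key : m ^ 2 < 2 * n := by nlinarith [hkq']
      have : q - 2 = m := by omega
      rw [this]
      exact key
    obtain ⟨mm, hmm⟩ : ∃ mm, k0 = mm + 1 := ⟨k0 - 1, by omega⟩
    obtain ⟨N, hN⟩ : ∃ N, N = k0 * (2 * k0 + 4) := ⟨_, rfl⟩
    have hlow : N ≤ n := by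
      rw [hN]
      calc k0 * (2 * k0 + 4) ≤ k0 * q := Nat.mul_le_mul_left _ hq4
        _ ≤ n := hkq
    have hup : n ≤ N + 1 := by
      have hNe : N = 2 * S + 4 * k0 := by rw [hN, hS]; ring
      omega
    obtain ⟨t, ht, hnt⟩ : ∃ t, t ≤ 1 ∧ n = N + t := ⟨n - N, by omega, by omega⟩
    refine ⟨2 * k0 + 1, k0 + 1, mm + t, by omega, by omega, ?_, ?_, ?_⟩
    · have hsq : ((2 * k0 + 1) - 2) ^ 2 < 2 * n := by
        have h1 : (2 * k0 + 1) - 2 = 2 * mm + 1 := by omega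
        rw [h1]
        have h2 : N ≤ n := hlow
        rw [hN, hmm] at h2
        nlinarith [h2]
      have := lt_ceil_sqrt n ((2 * k0 + 1) - 2) hsq
      omega
    · rw [hnt, hN, hmm]; ring
    · rw [show n = (k0 + 1) * (2 * k0 + 1) + (mm + t) from by rw [hnt, hN, hmm]; ring]
      exact digits_binomial (2 * k0 + 1) (k0 + 1) (mm + t) (by omega) (by omega) (by omega)
end
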